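/- For every integer k define holomorphic functions A_k, B_k on ℂ∖{0} by A_k(x) = 1 and B_k(x) = x^{k+1}/(k+1) if k ≠ −1, and A_{−1}(x) = 1/(√2·x), B_{−1}(x) = x/√2. Then for every k ∈ ℤ and every x ∈ ℂ∖{0}, the Wronskian satisfies A_k(x)·B_k′(x) − A_k′(x)·B_k(x) = x^k (where x^k is the integer power zpow and derivatives are complex derivatives); in particular this Wronskian is nonvanishing on ℂ∖{0}. -/

import Mathlib

open Complex

/-- Example 1.9: the coefficient functions `A_k, B_k` of the contact forms
`α_k = A_k(x) dz + B_k(x) dy` on `ℂ* × ℂ²` have Wronskian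
`A_k·B_k′ − A_k′·B_k = x^k`, which is nonvanishing on `ℂ∖{0}`. -/
theorem wronskian_alpha_k (k : ℤ)
    (A B : ℂ → ℂ)
    (hA : A = fun x => if k = -1 then 1 / ((Real.sqrt 2 : ℂ) * x) else 1)
    (hB : B = fun x => if k = -1 then x / (Real.sqrt 2 : ℂ) else x ^ (k + 1) / ((k : ℂ) + 1)) :
    ∀ x : ℂ, x ≠ 0 →
      A x * deriv B x - deriv A x * B x = x ^ k ∧
      A x * deriv B x - deriv A x * B x ≠ 0 := by
  intro x hx
  have hs : (Real.sqrt 2 : ℂ) ≠ 0 := by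
    simp [Complex.ofReal_ne_zero, Real.sqrt_eq_zero']
  have key : A x * deriv B x - deriv A x * B x = x ^ k := by
    by_cases hk : k = -1
    · subst hk
      simp only [hA, hB, reduceIte]
      have hdB : deriv (fun x : ℂ => x / (Real.sqrt 2 : ℂ)) x = 1 / (Real.sqrt 2 : ℂ) := by
        simp [div_eq_mul_inv]
      have hdA : deriv (fun x : ℂ => 1 / ((Real.sqrt 2 : ℂ) * x)) x
          = -(Real.sqrt 2 : ℂ) / ((Real.sqrt 2 : ℂ) * x) ^ 2 := by
        have : (fun x : ℂ => 1 / ((Real.sqrt 2 : ℂ) * x))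
            = fun x : ℂ => ((Real.sqrt 2 : ℂ) * x)⁻¹ := by
          funext y; simp [one_div]
        rw [this]
        have hxx : (Real.sqrt 2 : ℂ) * x ≠ 0 := mul_ne_zero hs hx
        have := (hasDerivAt_id x).const_mul (Real.sqrt 2 : ℂ)
        have h2 : HasDerivAt (fun x : ℂ => ((Real.sqrt 2 : ℂ) * x)⁻¹)
            (-(Real.sqrt 2 : ℂ) / ((Real.sqrt 2 : ℂ) * x) ^ 2) x := by
          exact (this.inv hxx).congr_deriv (by simp)
        exact h2.deriv
      rw [hdA, hdB]
      have h2 : ((Real.sqrt 2 : ℂ)) * (Real.sqrt 2 : ℂ) = 2 := by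
        rw [← Complex.ofReal_mul, Real.mul_self_sqrt (by norm_num)]
        norm_num
      have hsq : ((Real.sqrt 2 : ℂ) * x) ^ 2 ≠ 0 := pow_ne_zero _ (mul_ne_zero hs hx)
      rw [zpow_neg_one]
      field_simp
      ring_nf
      have h4 : ((Real.sqrt 2 : ℂ)) ^ 5 = ((Real.sqrt 2 : ℂ)) ^ 3 * 2 := by
        rw [show (5:ℕ) = 3 + 2 from rfl, pow_add, pow_two, h2]
      rw [pow_two, h2]
    · simp only [hA, hB, if_neg hk]
      have hk1 : ((k : ℂ) + 1) ≠ 0 := by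
        intro h
        apply hk
        have : ((k : ℂ) + 1) = ((k + 1 : ℤ) : ℂ) := by push_cast; ring
        rw [this] at h
        have := Int.cast_injective (α := ℂ) (h.trans (Int.cast_zero).symm)
        omega
      have hdB : deriv (fun x : ℂ => x ^ (k + 1) / ((k : ℂ) + 1)) x
          = ((k : ℂ) + 1) * x ^ k / ((k : ℂ) + 1) := by
        rw [deriv_div_const, deriv_zpow]
        congr 1
        · push_cast; ring_nf
      rw [hdB]
      simp only [deriv_const']
      field_simp
      ring
  refine ⟨key, ?_⟩
  rw [key]
  exact zpow_ne_zero _ hx
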